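/- Let d_m(W) denote the minimum distance of 𝒜(m,W). For W = {r₁,…,r₂} with 0 < r₁ ≤ r₂ < m, d_m(W) ≤ min{ D₂, 2·d_{m−1}(W₋₁,₋₁), 3·d_{m−1}(W) }, where D₂ = d_{m−1}({r₁,…,r₂−1}) if r₁ < r₂ and is omitted if r₁ = r₂, and W₋₁,₋₁ = {r₁−1,…,r₂−1}. -/

import Mathlib

open Finset

abbrev F2 := ZMod 2
abbrev F4 := GaloisField 2 2

def A3 : Matrix (ZMod 3) (ZMod 3) F2 := !![1,1,1; 1,1,0; 1,0,1]

/-- The `m`-fold Kronecker power of `A3`, with rows and columns indexed by `Fin m → ZMod 3`. -/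
def A3pow (m : ℕ) : Matrix (Fin m → ZMod 3) (Fin m → ZMod 3) F2 :=
  fun r c => ∏ i, A3 (r i) (c i)

/-- The DFT coefficient at frequency `j` as an `F2`-linear functional. -/
noncomputable def dftL (m : ℕ) (α : F4) (j : Fin m → ZMod 3) :
    ((Fin m → ZMod 3) → F2) →ₗ[F2] F4 :=
  ∑ i : Fin m → ZMod 3,
    α ^ (∑ l, i l * j l).val • ((Algebra.linearMap F2 F4).comp (LinearMap.proj i))

/-- The abelian code with frequency weight set `W`. -/
noncomputable def abelianCode (m : ℕ) (α : F4) (W : Finset ℕ) :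
    Submodule F2 ((Fin m → ZMod 3) → F2) :=
  ⨅ j ∈ {j : Fin m → ZMod 3 | hammingNorm j ∉ W}, LinearMap.ker (dftL m α j)

/-- The BiD code as the span of the rows of `A3pow m` with weight in the prescribed range. -/
noncomputable def BiD (m r₁ r₂ : ℕ) : Submodule F2 ((Fin m → ZMod 3) → F2) :=
  Submodule.span F2 {a | ∃ r, (2^r₂ * 3^(m-r₂) ≤ hammingNorm (A3pow m r) ∧
    hammingNorm (A3pow m r) ≤ 2^r₁ * 3^(m-r₁)) ∧ a = A3pow m r}

/-- Minimum distance of a linear code. -/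
noncomputable def minDist {m : ℕ} (C : Submodule F2 ((Fin m → ZMod 3) → F2)) : ℕ :=
  sInf {d : ℕ | ∃ a ∈ C, a ≠ 0 ∧ hammingNorm a = d}

/-! ### Auxiliary lemmas -/

lemma sum_zmod3 {M : Type*} [AddCommMonoid M] (F : ZMod 3 → M) : ∑ x, F x = F 0 + F 1 + F 2 := by
  have h : (Finset.univ : Finset (ZMod 3)) = {0,1,2} := by decide
  rw [h, Finset.sum_insert (by decide), Finset.sum_insert (by decide), Finset.sum_singleton,
    add_assoc]

lemma alpha_pow_add (α : F4) (hα : orderOf α = 3) (x y : ZMod 3) :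
    α ^ ((x + y).val) = α ^ x.val * α ^ y.val := by
  rw [← pow_add, ZMod.val_add]
  conv_rhs => rw [← pow_mod_orderOf]
  rw [hα]

lemma one_add_alpha (α : F4) (hα : orderOf α = 3) : 1 + α + α ^ 2 = 0 := by
  have h3 : α ^ 3 = 1 := by rw [← hα]; exact pow_orderOf_eq_one α
  have hne : α ≠ 1 := by intro h; rw [h, orderOf_one] at hα; omega
  have hfac : (α - 1) * (α ^ 2 + α + 1) = α ^ 3 - 1 := by ring
  rw [h3, sub_self] at hfac
  rcases mul_eq_zero.mp hfac with h | h
  · exact absurd (sub_eq_zero.mp h) hne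
  · linear_combination h

lemma two_eq_zero_F4 : (1 : F4) + 1 = 0 := by
  have := CharP.cast_eq_zero F4 2
  push_cast at this
  linear_combination this

noncomputable def dft1 (α : F4) (j₀ : ZMod 3) (f : ZMod 3 → F2) : F4 :=
  ∑ x, α ^ ((x * j₀).val) * algebraMap F2 F4 (f x)

def onesF : ZMod 3 → F2 := fun _ => 1
def deltaF : ZMod 3 → F2 := fun x => if x = 0 then 1 else 0
def gF : ZMod 3 → F2 := fun x => if x = 0 then 0 else 1

lemma zmod3_cases (z : ZMod 3) : z = 0 ∨ z = 1 ∨ z = 2 := by revert z; decide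

lemma zm1 : ¬ (1:ZMod 3) = 0 := by decide
lemma zm2 : ¬ (2:ZMod 3) = 0 := by decide
lemma zv1 : ZMod.val (1:ZMod 3) = 1 := by decide
lemma zv2 : ZMod.val (2:ZMod 3) = 2 := by decide
lemma zv22 : ((2:ZMod 3)*2).val = 1 := by decide

lemma dft1_delta (α : F4) (j₀ : ZMod 3) : dft1 α j₀ deltaF = 1 := by
  rw [dft1, sum_zmod3]
  rcases zmod3_cases j₀ with h | h | h <;> subst h <;> simp [deltaF, zm1, zm2]

lemma dft1_ones (α : F4) (hα : orderOf α = 3) (j₀ : ZMod 3) :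
    dft1 α j₀ onesF = if j₀ = 0 then 1 else 0 := by
  rw [dft1, sum_zmod3]
  rcases zmod3_cases j₀ with h | h | h <;> subst h <;>
    simp [onesF, zm1, zm2, zv1, zv2, zv22]
  · linear_combination two_eq_zero_F4
  · linear_combination one_add_alpha α hα
  · linear_combination one_add_alpha α hα

lemma dft1_g (α : F4) (hα : orderOf α = 3) (j₀ : ZMod 3) :
    dft1 α j₀ gF = if j₀ = 0 then 0 else 1 := by
  rw [dft1, sum_zmod3]
  rcases zmod3_cases j₀ with h | h | h <;> subst h <;>
    simp [gF, zm1, zm2, zv1, zv2, zv22]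
  · exact two_eq_zero_F4
  · linear_combination one_add_alpha α hα - two_eq_zero_F4
  · linear_combination one_add_alpha α hα - two_eq_zero_F4

lemma dftL_apply (m : ℕ) (α : F4) (j : Fin m → ZMod 3) (a : (Fin m → ZMod 3) → F2) :
    dftL m α j a = ∑ i, α ^ (∑ l, i l * j l).val * algebraMap F2 F4 (a i) := by
  simp [dftL, LinearMap.sum_apply, LinearMap.smul_apply, smul_eq_mul]

def extF {n : ℕ} (f : ZMod 3 → F2) (b : (Fin n → ZMod 3) → F2) : (Fin (n+1) → ZMod 3) → F2 :=
  fun i => f (i 0) * b (fun l => i l.succ)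

lemma dftL_ext {n : ℕ} (α : F4) (hα : orderOf α = 3) (f : ZMod 3 → F2)
    (b : (Fin n → ZMod 3) → F2) (j : Fin (n+1) → ZMod 3) :
    dftL (n+1) α j (extF f b) = dft1 α (j 0) f * dftL n α (fun l => j l.succ) b := by
  rw [dftL_apply, dftL_apply, dft1, Finset.sum_mul_sum, ← Fintype.sum_prod_type']
  refine (Fintype.sum_equiv (Fin.consEquiv (fun _ => ZMod 3)) _ _ ?_).symm
  rintro ⟨x, i'⟩
  simp only [Fin.consEquiv_apply, extF, Fin.sum_univ_succ, Fin.cons_zero, Fin.cons_succ]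
  rw [alpha_pow_add α hα, map_mul]
  ring

lemma hammingNorm_eq_sum {k : ℕ} {β : Type*} [DecidableEq β] [Zero β] (f : Fin k → β) :
    hammingNorm f = ∑ i, if f i ≠ 0 then 1 else 0 := by
  rw [hammingNorm, Finset.card_filter]

lemma hn_succ {n : ℕ} (j : Fin (n+1) → ZMod 3) :
    hammingNorm j = (if j 0 = 0 then 0 else 1) + hammingNorm (fun l : Fin n => j l.succ) := by
  rw [hammingNorm_eq_sum, hammingNorm_eq_sum, Fin.sum_univ_succ]
  congr 1
  by_cases h : j 0 = 0 <;> simp [h]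

lemma hn_ext {n : ℕ} (f : ZMod 3 → F2) (b : (Fin n → ZMod 3) → F2) :
    hammingNorm (extF f b) = hammingNorm f * hammingNorm b := by
  rw [hammingNorm, hammingNorm, hammingNorm, Finset.card_filter, Finset.card_filter,
    Finset.card_filter, Finset.sum_mul_sum, ← Fintype.sum_prod_type']
  refine (Fintype.sum_equiv (Fin.consEquiv (fun _ => ZMod 3)) _ _ ?_).symm
  rintro ⟨x, i'⟩
  simp only [Fin.consEquiv_apply, extF, Fin.cons_zero, Fin.cons_succ]
  by_cases hf : f x = 0 <;> by_cases hb : b i' = 0 <;> simp [hf, hb, mul_ne_zero]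

lemma mem_abelianCode {m : ℕ} {α : F4} {W : Finset ℕ} {a : (Fin m → ZMod 3) → F2} :
    a ∈ abelianCode m α W ↔ ∀ j, hammingNorm j ∉ W → dftL m α j a = 0 := by
  simp [abelianCode, Submodule.mem_iInf, LinearMap.mem_ker, Set.mem_setOf_eq]

def tens : {n : ℕ} → (Fin n → (ZMod 3 → F2)) → ((Fin n → ZMod 3) → F2)
  | 0, _ => fun _ => 1
  | _+1, c => extF (c 0) (tens (fun l => c l.succ))

lemma dftL_tens (α : F4) (hα : orderOf α = 3) :
    ∀ {n : ℕ} (c : Fin n → (ZMod 3 → F2)) (j : Fin n → ZMod 3),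
      dftL n α j (tens c) = ∏ l, dft1 α (j l) (c l)
  | 0, c, j => by
      rw [dftL_apply]
      simp [tens]
  | n+1, c, j => by
      rw [show tens c = extF (c 0) (tens (fun l => c l.succ)) from rfl,
        dftL_ext α hα, dftL_tens α hα, Fin.prod_univ_succ]

lemma tens_apply : ∀ {n : ℕ} (c : Fin n → (ZMod 3 → F2)) (i : Fin n → ZMod 3),
    tens c i = ∏ l, c l (i l)
  | 0, c, i => by simp [tens]
  | n+1, c, i => by
      rw [show tens c i = c 0 (i 0) * tens (fun l => c l.succ) (fun l => i l.succ) from rfl,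
        tens_apply, Fin.prod_univ_succ]

lemma card_filter_val_lt (n w : ℕ) (h : w ≤ n) :
    ((univ : Finset (Fin n)).filter fun l => l.val < w).card = w := by
  have heq : ((univ : Finset (Fin n)).filter fun l => l.val < w)
      = (Finset.range w).attachFin (fun m hm => lt_of_lt_of_le (Finset.mem_range.mp hm) h) := by
    ext a
    simp [Finset.mem_attachFin, Finset.mem_range]
  rw [heq, Finset.card_attachFin, Finset.card_range]

/-- existence of a nonzero codeword of frequency-weight `w`. -/
lemma exists_nonzero_codeword (α : F4) (hα : orderOf α = 3) {n w : ℕ} {W : Finset ℕ}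
    (hw : w ≤ n) (hW : w ∈ W) : ∃ a ∈ abelianCode n α W, a ≠ 0 := by
  set c : Fin n → (ZMod 3 → F2) := fun l => if l.val < w then gF else onesF with hc
  refine ⟨tens c, ?_, ?_⟩
  · rw [mem_abelianCode]
    intro j hj
    rw [dftL_tens α hα]
    by_contra hne
    have hall := Finset.prod_ne_zero_iff.mp hne
    have hiff : ∀ l : Fin n, j l ≠ 0 ↔ l.val < w := by
      intro l
      have := hall l (Finset.mem_univ l)
      by_cases hl : l.val < w
      · simp only [hc, if_pos hl, dft1_g α hα] at this
        constructor
        · intro _; exact hl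
        · intro _; intro h0; rw [if_pos h0] at this; exact this rfl
      · simp only [hc, if_neg hl, dft1_ones α hα] at this
        constructor
        · intro hj0
          rw [if_neg hj0] at this; exact absurd rfl this
        · intro h; exact absurd h hl
    have : hammingNorm j = w := by
      rw [hammingNorm]
      rw [show ((univ : Finset (Fin n)).filter fun l => j l ≠ 0)
          = ((univ : Finset (Fin n)).filter fun l => l.val < w) from by
        apply Finset.filter_congr; intro l _; simp [hiff l]]
      exact card_filter_val_lt n w hw
    rw [this] at hj
    exact hj hW
  · intro h0
    have := congrFun h0 (fun l => if l.val < w then 1 else 0)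
    rw [tens_apply] at this
    simp only [Pi.zero_apply] at this
    apply one_ne_zero (α := F2)
    rw [← this]
    symm
    apply Finset.prod_eq_one
    intro l _
    by_cases hl : l.val < w <;> simp [hc, hl, gF, onesF]

lemma minDist_le {m : ℕ} {C : Submodule F2 ((Fin m → ZMod 3) → F2)}
    (a : (Fin m → ZMod 3) → F2) (ha : a ∈ C) (hne : a ≠ 0) : minDist C ≤ hammingNorm a :=
  Nat.sInf_le ⟨a, ha, hne, rfl⟩

lemma minDist_attained {m : ℕ} {C : Submodule F2 ((Fin m → ZMod 3) → F2)}
    (h : ∃ a ∈ C, a ≠ 0) : ∃ a ∈ C, a ≠ 0 ∧ hammingNorm a = minDist C := by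
  obtain ⟨a, ha, hne⟩ := h
  have hne' : {d : ℕ | ∃ a ∈ C, a ≠ 0 ∧ hammingNorm a = d}.Nonempty := ⟨_, a, ha, hne, rfl⟩
  obtain ⟨b, hb, hbne, hbd⟩ := Nat.sInf_mem hne'
  exact ⟨b, hb, hbne, hbd⟩

lemma hn_ones : hammingNorm onesF = 3 := by decide
lemma hn_delta : hammingNorm deltaF = 1 := by decide
lemma hn_g : hammingNorm gF = 2 := by decide

/-- Recursive upper bound on the minimum distance of `𝒜(m,{r₁,…,r₂})` for
`0 < r₁ ≤ r₂ < m` (the `D₂` term is omitted, i.e. `+∞`, when `r₁ = r₂`). -/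
theorem minDist_recursive_upper_bound (m r₁ r₂ : ℕ) (h0 : 0 < r₁) (h12 : r₁ ≤ r₂)
    (h2m : r₂ < m) (α : F4) (hα : orderOf α = 3) :
    (minDist (abelianCode m α (Finset.Icc r₁ r₂)) : ℕ∞)
      ≤ min (if r₁ < r₂ then (minDist (abelianCode (m-1) α (Finset.Icc r₁ (r₂-1))) : ℕ∞) else ⊤)
          (min (2 * (minDist (abelianCode (m-1) α (Finset.Icc (r₁-1) (r₂-1))) : ℕ∞))
            (3 * (minDist (abelianCode (m-1) α (Finset.Icc r₁ r₂)) : ℕ∞))) := by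
  obtain ⟨n, rfl⟩ : ∃ n, m = n + 1 := ⟨m - 1, by omega⟩
  simp only [Nat.succ_sub_one]
  have hr2n : r₂ ≤ n := by omega
  refine le_min ?_ (le_min ?_ ?_)
  · -- D₂ bound
    by_cases h : r₁ < r₂
    · rw [if_pos h]
      obtain ⟨b, hb, hbne, hbd⟩ := minDist_attained
        (exists_nonzero_codeword α hα (n := n) (w := r₁) (W := Finset.Icc r₁ (r₂-1))
          (by omega) (Finset.mem_Icc.mpr ⟨le_refl r₁, by omega⟩))
      set a := extF deltaF b with ha
      have hmem : a ∈ abelianCode (n+1) α (Finset.Icc r₁ r₂) := by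
        rw [mem_abelianCode]
        intro j hj
        rw [ha, dftL_ext α hα, dft1_delta, one_mul]
        apply (mem_abelianCode.mp hb)
        intro hin
        apply hj
        rw [Finset.mem_Icc] at hin ⊢
        have := hn_succ j
        by_cases h0' : j 0 = 0 <;> simp [h0'] at this <;> omega
      have hane : a ≠ 0 := by
        intro h0
        apply hbne
        have hw : hammingNorm a = 0 := by rw [h0]; simp [hammingNorm]
        rw [ha, hn_ext, hn_delta, one_mul] at hw
        exact (hammingNorm_eq_zero).mp hw
      calc (minDist (abelianCode (n+1) α (Finset.Icc r₁ r₂)) : ℕ∞)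
          ≤ (hammingNorm a : ℕ∞) := by exact_mod_cast minDist_le a hmem hane
        _ = _ := by rw [ha, hn_ext, hn_delta, one_mul, hbd]
    · rw [if_neg h]; exact le_top
  · -- 2·d bound
    obtain ⟨b, hb, hbne, hbd⟩ := minDist_attained
      (exists_nonzero_codeword α hα (n := n) (w := r₁ - 1) (W := Finset.Icc (r₁-1) (r₂-1))
        (by omega) (Finset.mem_Icc.mpr ⟨le_refl _, by omega⟩))
    set a := extF gF b with ha
    have hmem : a ∈ abelianCode (n+1) α (Finset.Icc r₁ r₂) := by
      rw [mem_abelianCode]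
      intro j hj
      rw [ha, dftL_ext α hα, dft1_g α hα]
      by_cases h0' : j 0 = 0
      · rw [if_pos h0', zero_mul]
      · rw [if_neg h0', one_mul]
        apply (mem_abelianCode.mp hb)
        intro hin
        apply hj
        rw [Finset.mem_Icc] at hin ⊢
        have := hn_succ j
        simp [h0'] at this
        omega
    have hane : a ≠ 0 := by
      intro h0
      apply hbne
      have hw : hammingNorm a = 0 := by rw [h0]; simp [hammingNorm]
      rw [ha, hn_ext, hn_g] at hw
      exact (hammingNorm_eq_zero).mp (by omega)
    calc (minDist (abelianCode (n+1) α (Finset.Icc r₁ r₂)) : ℕ∞)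
        ≤ (hammingNorm a : ℕ∞) := by exact_mod_cast minDist_le a hmem hane
      _ = _ := by
          rw [ha, hn_ext, hn_g, hbd]
          push_cast
          ring
  · -- 3·d bound
    obtain ⟨b, hb, hbne, hbd⟩ := minDist_attained
      (exists_nonzero_codeword α hα (n := n) (w := r₁) (W := Finset.Icc r₁ r₂)
        (by omega) (Finset.mem_Icc.mpr ⟨le_refl r₁, h12⟩))
    set a := extF onesF b with ha
    have hmem : a ∈ abelianCode (n+1) α (Finset.Icc r₁ r₂) := by
      rw [mem_abelianCode]
      intro j hj
      rw [ha, dftL_ext α hα, dft1_ones α hα]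
      by_cases h0' : j 0 = 0
      · rw [if_pos h0', one_mul]
        apply (mem_abelianCode.mp hb)
        intro hin
        apply hj
        have := hn_succ j
        simp [h0'] at this
        rwa [this]
      · rw [if_neg h0', zero_mul]
    have hane : a ≠ 0 := by
      intro h0
      apply hbne
      have hw : hammingNorm a = 0 := by rw [h0]; simp [hammingNorm]
      rw [ha, hn_ext, hn_ones] at hw
      exact (hammingNorm_eq_zero).mp (by omega)
    calc (minDist (abelianCode (n+1) α (Finset.Icc r₁ r₂)) : ℕ∞)
        ≤ (hammingNorm a : ℕ∞) := by exact_mod_cast minDist_le a hmem hane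
      _ = _ := by
          rw [ha, hn_ext, hn_ones, hbd]
          push_cast
          ring
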